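/- The gauge group of the electro-weak finite space equals (U(1) × SU(2))/ℤ₂: the map ρ : Circle × SU(2, ℂ) → U(4, ℂ) defined by ρ(λ, q) = the block-diagonal 4×4 matrix with entries ρ₀₀ = 1, ρ₁₁ = λ⁻², ρ_{2+i, 2+j} = λ⁻¹·q_{ij} for i, j ∈ {0,1}, and all other entries 0, is a group homomorphism whose kernel is exactly the two-element subgroup {(1, 1), (−1, −1)} (isomorphic to ℤ/2ℤ). -/

import Mathlib

open Matrix Complex

namespace GaugeEW

noncomputable def rhoMat (l : Circle) (q : Matrix (Fin 2) (Fin 2) ℂ) :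
    Matrix (Fin 4) (Fin 4) ℂ :=
  !![1, 0, 0, 0;
     0, ((l : ℂ))⁻¹ ^ 2, 0, 0;
     0, 0, (l : ℂ)⁻¹ * q 0 0, (l : ℂ)⁻¹ * q 0 1;
     0, 0, (l : ℂ)⁻¹ * q 1 0, (l : ℂ)⁻¹ * q 1 1]

lemma conj_circle (l : Circle) : (starRingEnd ℂ) ((l : ℂ)) = (l : ℂ)⁻¹ := by
  rw [← Circle.coe_inv_eq_conj, Circle.coe_inv]

lemma conj_inv_circle (l : Circle) : (starRingEnd ℂ) ((l : ℂ)⁻¹) = (l : ℂ) := by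
  rw [← Circle.coe_inv, Circle.coe_inv_eq_conj, Complex.conj_conj]

lemma rhoMat_mul (l₁ l₂ : Circle) (q₁ q₂ : Matrix (Fin 2) (Fin 2) ℂ) :
    rhoMat l₁ q₁ * rhoMat l₂ q₂ = rhoMat (l₁ * l₂) (q₁ * q₂) := by
  ext i j
  fin_cases i <;> fin_cases j <;>
    simp [rhoMat, Matrix.mul_apply, Fin.sum_univ_four, Fin.sum_univ_two, mul_inv, Matrix.vecHead, Matrix.vecTail] <;>
    ring

lemma rhoMat_star (l : Circle) (q : Matrix (Fin 2) (Fin 2) ℂ) :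
    star (rhoMat l q) = rhoMat l⁻¹ (star q) := by
  ext i j
  fin_cases i <;> fin_cases j <;>
    simp [rhoMat, Matrix.conjTranspose_apply, Circle.coe_inv, inv_inv, map_pow,
      conj_inv_circle, conj_circle, inv_inv, Matrix.star_apply, Matrix.vecHead, Matrix.vecTail]

lemma rhoMat_one : rhoMat 1 1 = 1 := by
  ext i j
  fin_cases i <;> fin_cases j <;> simp [rhoMat, Matrix.one_apply, Matrix.vecHead, Matrix.vecTail]

lemma rhoMat_mem (l : Circle) (q : Matrix.specialUnitaryGroup (Fin 2) ℂ) :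
    rhoMat l (q : Matrix (Fin 2) (Fin 2) ℂ) ∈ Matrix.unitaryGroup (Fin 4) ℂ := by
  rw [Matrix.mem_unitaryGroup_iff', rhoMat_star, rhoMat_mul, inv_mul_cancel,
    Matrix.mem_unitaryGroup_iff'.mp q.2.1, rhoMat_one]

end GaugeEW

open GaugeEW in
/-- The gauge group of the electro-weak finite space equals `(U(1) × SU(2))/ℤ₂`:
the map `ρ : Circle × SU(2,ℂ) → U(4,ℂ)` given by the block-diagonal matrix
`ρ(λ, q) = diag(1, λ⁻²) ⊕ λ⁻¹·q` is a group homomorphism whose kernel is exactly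
the two-element subgroup `{(1, 1), (−1, −1)} ≃ ℤ/2ℤ`. -/
theorem gauge_group_EW :
    ∃ ρ : (Circle × Matrix.specialUnitaryGroup (Fin 2) ℂ) →*
        Matrix.unitaryGroup (Fin 4) ℂ,
      (∀ (l : Circle) (q : Matrix.specialUnitaryGroup (Fin 2) ℂ),
        (ρ (l, q) : Matrix (Fin 4) (Fin 4) ℂ) =
          !![1, 0, 0, 0;
             0, ((l : ℂ))⁻¹ ^ 2, 0, 0;
             0, 0, (l : ℂ)⁻¹ * (q : Matrix (Fin 2) (Fin 2) ℂ) 0 0,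
                   (l : ℂ)⁻¹ * (q : Matrix (Fin 2) (Fin 2) ℂ) 0 1;
             0, 0, (l : ℂ)⁻¹ * (q : Matrix (Fin 2) (Fin 2) ℂ) 1 0,
                   (l : ℂ)⁻¹ * (q : Matrix (Fin 2) (Fin 2) ℂ) 1 1]) ∧
      (∀ (l : Circle) (q : Matrix.specialUnitaryGroup (Fin 2) ℂ),
        ρ (l, q) = 1 ↔
          (((l : ℂ) = 1 ∧ (q : Matrix (Fin 2) (Fin 2) ℂ) = 1) ∨
           ((l : ℂ) = -1 ∧ (q : Matrix (Fin 2) (Fin 2) ℂ) = -1))) := by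
  refine ⟨MonoidHom.mk' (fun p => ⟨rhoMat p.1 (p.2 : Matrix (Fin 2) (Fin 2) ℂ),
      rhoMat_mem p.1 p.2⟩) ?_, ?_, ?_⟩
  · rintro ⟨l₁, q₁⟩ ⟨l₂, q₂⟩
    exact Subtype.ext (by simp [rhoMat_mul])
  · intro l q
    rfl
  · intro l q
    constructor
    · intro h
      have h' : rhoMat l (q : Matrix (Fin 2) (Fin 2) ℂ) = 1 := congrArg Subtype.val h
      have h11 := congrFun (congrFun h' 1) 1
      have h22 := congrFun (congrFun h' 2) 2
      have h23 := congrFun (congrFun h' 2) 3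
      have h32 := congrFun (congrFun h' 3) 2
      have h33 := congrFun (congrFun h' 3) 3
      have hl0 : (l : ℂ) ≠ 0 := l.coe_ne_zero
      simp [rhoMat, Matrix.one_apply, Matrix.vecHead, Matrix.vecTail, Fin.ext_iff,
        inv_eq_zero, mul_eq_zero, hl0] at h11 h22 h23 h32 h33
      replace h23 : (l : ℂ)⁻¹ * (q : Matrix (Fin 2) (Fin 2) ℂ) 0 1 = 0 := by rw [h23, mul_zero]
      replace h32 : (l : ℂ)⁻¹ * (q : Matrix (Fin 2) (Fin 2) ℂ) 1 0 = 0 := by rw [h32, mul_zero]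
      have hq01 : (q : Matrix (Fin 2) (Fin 2) ℂ) 0 1 = 0 := by
        rcases mul_eq_zero.mp h23 with h | h
        · exact absurd h (inv_ne_zero hl0)
        · exact h
      have hq10 : (q : Matrix (Fin 2) (Fin 2) ℂ) 1 0 = 0 := by
        rcases mul_eq_zero.mp h32 with h | h
        · exact absurd h (inv_ne_zero hl0)
        · exact h
      have hq00 : (q : Matrix (Fin 2) (Fin 2) ℂ) 0 0 = (l : ℂ) := by
        field_simp at h22; linear_combination h22
      have hq11 : (q : Matrix (Fin 2) (Fin 2) ℂ) 1 1 = (l : ℂ) := by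
        field_simp at h33; linear_combination h33
      rcases h11 with hl | hl
      · have hl : (l : ℂ) = 1 := by rw [hl]
        refine Or.inl ⟨hl, ?_⟩
        ext i j
        fin_cases i <;> fin_cases j <;>
          simp [Matrix.one_apply, hq00, hq11, hq01, hq10, hl, Fin.ext_iff]
      · refine Or.inr ⟨hl, ?_⟩
        ext i j
        fin_cases i <;> fin_cases j <;>
          simp [Matrix.one_apply, hq00, hq11, hq01, hq10, hl, Matrix.neg_apply, Fin.ext_iff]
    · rintro (⟨hl, hq⟩ | ⟨hl, hq⟩) <;>
      · refine Subtype.ext ?_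
        show rhoMat l (q : Matrix (Fin 2) (Fin 2) ℂ) = 1
        ext i j
        fin_cases i <;> fin_cases j <;>
          norm_num [rhoMat, Matrix.one_apply, hl, hq, Matrix.neg_apply, Matrix.vecHead, Matrix.vecTail, Fin.ext_iff]
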